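/- Under the hypotheses of the previous identity, if additionally Im(f²(z)) < 0 for every z ∈ [z₁, z₂] and w is not identically zero, then Im(f(z)f′′(z) + A(z)f²(z)) < 0 for some z ∈ (z₁, z₂). -/

import Mathlib

open MeasureTheory Set Complex intervalIntegral

theorem stmt_6 (z₁ z₂ : ℝ) (hz : z₁ < z₂) (f f' f'' w w' w'' A : ℝ → ℂ)
    (hf : ∀ z ∈ Set.Icc z₁ z₂, HasDerivAt f (f' z) z)
    (hf' : ∀ z ∈ Set.Icc z₁ z₂, HasDerivAt f' (f'' z) z)
    (hf''int : IntervalIntegrable f'' MeasureTheory.volume z₁ z₂)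
    (hfne : ∀ z ∈ Set.Icc z₁ z₂, f z ≠ 0)
    (hA : ContinuousOn A (Set.Icc z₁ z₂))
    (hw : ∀ z ∈ Set.Icc z₁ z₂, HasDerivAt w (w' z) z)
    (hw' : ∀ z ∈ Set.Icc z₁ z₂, HasDerivAt w' (w'' z) z)
    (hw''cont : ContinuousOn w'' (Set.Icc z₁ z₂))
    (heq : ∀ z ∈ Set.Icc z₁ z₂, w'' z + A z * w z = 0)
    (hbc1 : w z₁ = 0) (hbc2 : w z₂ = 0)
    (hIm : ∀ z ∈ Set.Icc z₁ z₂, (f z ^ 2).im < 0)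
    (hwne : ∃ z ∈ Set.Icc z₁ z₂, w z ≠ 0) :
    ∃ z ∈ Set.Ioo z₁ z₂, (f z * f'' z + A z * f z ^ 2).im < 0 := by
  by_contra hcon
  push_neg at hcon
  -- notation
  set D : ℝ → ℂ := fun z => w' z * f z - w z * f' z with hD_def
  set F : ℝ → ℂ := fun z => w z / f z with hF_def
  have huIcc : uIcc z₁ z₂ = Icc z₁ z₂ := uIcc_of_le hz.le
  -- continuity facts
  have hfc : ContinuousOn f (Icc z₁ z₂) := fun z hz => (hf z hz).continuousAt.continuousWithinAt
  have hf'c : ContinuousOn f' (Icc z₁ z₂) := fun z hz => (hf' z hz).continuousAt.continuousWithinAt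
  have hwc : ContinuousOn w (Icc z₁ z₂) := fun z hz => (hw z hz).continuousAt.continuousWithinAt
  have hw'c : ContinuousOn w' (Icc z₁ z₂) := fun z hz => (hw' z hz).continuousAt.continuousWithinAt
  have hf2ne : ∀ z ∈ Icc z₁ z₂, f z ^ 2 ≠ 0 := fun z hz => pow_ne_zero _ (hfne z hz)
  have hDc : ContinuousOn D (Icc z₁ z₂) := (hw'c.mul hfc).sub (hwc.mul hf'c)
  have hFc : ContinuousOn F (Icc z₁ z₂) := hwc.div hfc hfne
  have hF'c : ContinuousOn (fun z => D z / f z ^ 2) (Icc z₁ z₂) :=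
    hDc.div (hfc.pow 2) hf2ne
  -- derivatives
  have hF : ∀ z ∈ Icc z₁ z₂, HasDerivAt F (D z / f z ^ 2) z :=
    fun z hz => (hw z hz).div (hf z hz) (hfne z hz)
  have hDdv : ∀ z ∈ Icc z₁ z₂, HasDerivAt D (w'' z * f z - w z * f'' z) z := by
    intro z hz
    have := ((hw' z hz).mul (hf z hz)).sub ((hw z hz).mul (hf' z hz))
    convert this using 1
    · rfl
    · rfl
    ring
  -- the potential φ and its derivative ψ
  set ψ : ℝ → ℝ := fun z => -(normSq (F z) * (f z * f'' z + A z * f z ^ 2).im)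
      + normSq (D z / f z ^ 2) * (f z ^ 2).im with hψ_def
  have hφ : ∀ z ∈ Icc z₁ z₂,
      HasDerivAt (fun t => (D t * (starRingEnd ℂ) (F t)).im) (ψ z) z := by
    intro z hz
    have hg : HasDerivAt (fun t => D t * (starRingEnd ℂ) (F t))
        ((w'' z * f z - w z * f'' z) * (starRingEnd ℂ) (F z)
          + D z * (starRingEnd ℂ) (D z / f z ^ 2)) z :=
      (hDdv z hz).mul (hF z hz).star
    have h3 := Complex.imCLM.hasFDerivAt.comp_hasDerivAt z hg
    refine h3.congr_deriv (Eq.symm ?_)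
    -- pointwise identity
    have hw'' : w'' z = -(A z * w z) := by
      have := heq z hz; linear_combination this
    have hc := hfne z hz
    have hcc : (starRingEnd ℂ) (f z) ≠ 0 := by simpa using hc
    have key : ((w'' z * f z - w z * f'' z) * (starRingEnd ℂ) (F z)
          + D z * (starRingEnd ℂ) (D z / f z ^ 2))
        = -((normSq (F z) : ℂ) * (f z * f'' z + A z * f z ^ 2))
          + (normSq (D z / f z ^ 2) : ℂ) * f z ^ 2 := by
      rw [hw'']
      simp only [hF_def, hD_def]
      rw [← Complex.mul_conj, ← Complex.mul_conj]
      simp only [map_div₀, map_sub, map_mul, map_pow]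
      field_simp
      ring
    rw [hψ_def]
    simp only [key]
    simp [Complex.add_im, Complex.mul_im, ← Complex.ofReal_pow, ← Complex.ofReal_div,
      Complex.ofReal_re, Complex.ofReal_im]
  -- integrability of ψ
  have hnormSqF : ContinuousOn (fun z => (normSq (F z) : ℝ)) (Icc z₁ z₂) :=
    Complex.continuous_normSq.comp_continuousOn hFc
  have him_int : IntervalIntegrable (fun z => (f z * f'' z + A z * f z ^ 2).im) volume z₁ z₂ := by
    have h1 : IntervalIntegrable (fun z => f z * f'' z + A z * f z ^ 2) volume z₁ z₂ := by
      apply IntervalIntegrable.add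
      · exact hf''int.continuousOn_mul (huIcc ▸ hfc)
      · exact (hA.mul (hfc.pow 2)).intervalIntegrable_of_Icc hz.le
    exact ⟨Complex.imCLM.integrable_comp h1.1, Complex.imCLM.integrable_comp h1.2⟩
  have hψ₁int : IntervalIntegrable
      (fun z => -(normSq (F z) * (f z * f'' z + A z * f z ^ 2).im)) volume z₁ z₂ :=
    (him_int.continuousOn_mul (huIcc ▸ hnormSqF)).neg
  have hψ₂c : ContinuousOn (fun z => normSq (D z / f z ^ 2) * (f z ^ 2).im) (Icc z₁ z₂) :=
    (Complex.continuous_normSq.comp_continuousOn hF'c).mul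
      (Complex.continuous_im.comp_continuousOn (hfc.pow 2))
  have hψ₂int : IntervalIntegrable (fun z => normSq (D z / f z ^ 2) * (f z ^ 2).im)
      volume z₁ z₂ := hψ₂c.intervalIntegrable_of_Icc hz.le
  have hψint : IntervalIntegrable ψ volume z₁ z₂ := hψ₁int.add hψ₂int
  -- FTC
  have hFTC : ∫ z in z₁..z₂, ψ z = 0 := by
    rw [intervalIntegral.integral_eq_sub_of_hasDerivAt (fun z hzi => hφ z (huIcc ▸ hzi)) hψint]
    simp [hF_def, hbc1, hbc2]
  have hsplit : (∫ z in z₁..z₂, ψ z)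
      = (∫ z in z₁..z₂, -(normSq (F z) * (f z * f'' z + A z * f z ^ 2).im))
        + ∫ z in z₁..z₂, normSq (D z / f z ^ 2) * (f z ^ 2).im :=
    intervalIntegral.integral_add hψ₁int hψ₂int
  -- ∫ ψ₁ ≤ 0
  have hae : ∀ᵐ z ∂(volume.restrict (Icc z₁ z₂)),
      0 ≤ normSq (F z) * (f z * f'' z + A z * f z ^ 2).im := by
    have h2 : ∀ᵐ z : ℝ, z ∉ ({z₁, z₂} : Set ℝ) :=
      MeasureTheory.measure_eq_zero_iff_ae_notMem.mp ((Set.toFinite ({z₁, z₂} : Set ℝ)).measure_zero volume)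
    filter_upwards [MeasureTheory.ae_restrict_mem measurableSet_Icc,
      MeasureTheory.ae_restrict_of_ae h2] with z hzi hz2
    simp only [Set.mem_insert_iff, Set.mem_singleton_iff, not_or] at hz2
    have hzo : z ∈ Ioo z₁ z₂ := ⟨lt_of_le_of_ne hzi.1 (Ne.symm hz2.1), lt_of_le_of_ne hzi.2 hz2.2⟩
    exact mul_nonneg (normSq_nonneg _) (hcon z hzo)
  have h1 : (∫ z in z₁..z₂, -(normSq (F z) * (f z * f'' z + A z * f z ^ 2).im)) ≤ 0 := by
    have := intervalIntegral.integral_nonneg_of_ae_restrict (μ := volume) hz.le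
      (f := fun z => normSq (F z) * (f z * f'' z + A z * f z ^ 2).im) hae
    rw [intervalIntegral.integral_neg]
    linarith
  -- exists z* with D z* ≠ 0
  have hDstar : ∃ zs ∈ Icc z₁ z₂, D zs ≠ 0 := by
    by_contra hD0
    push_neg at hD0
    obtain ⟨z₀, hz₀, hwz₀⟩ := hwne
    have hsub : Icc z₁ z₀ ⊆ Icc z₁ z₂ := Icc_subset_Icc le_rfl hz₀.2
    have husub : uIcc z₁ z₀ = Icc z₁ z₀ := uIcc_of_le hz₀.1
    have hFz₀ : F z₀ - F z₁ = ∫ z in z₁..z₀, D z / f z ^ 2 := by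
      refine (intervalIntegral.integral_eq_sub_of_hasDerivAt
        (fun z hzi => hF z (hsub (husub ▸ hzi))) ?_).symm
      exact ((hF'c.mono hsub).intervalIntegrable_of_Icc hz₀.1)
    have hzero : (∫ z in z₁..z₀, D z / f z ^ 2) = 0 := by
      rw [intervalIntegral.integral_congr (g := fun _ => (0 : ℂ))
        (fun z hzi => by rw [hD0 z (hsub (husub ▸ hzi))]; simp)]
      simp
    have : F z₀ = 0 := by
      have hFz₁ : F z₁ = 0 := by simp [hF_def, hbc1]
      rw [hFz₁] at hFz₀; rw [hzero] at hFz₀; linear_combination hFz₀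
    exact hwz₀ (by
      have := this
      simp only [hF_def, div_eq_zero_iff] at this
      rcases this with h | h
      · exact h
      · exact absurd h (hfne z₀ hz₀))
  obtain ⟨zs, hzs, hDzs⟩ := hDstar
  -- ∫ ψ₂ < 0
  have h2 : (∫ z in z₁..z₂, normSq (D z / f z ^ 2) * (f z ^ 2).im) < 0 := by
    have hpos : 0 < ∫ z in z₁..z₂, -(normSq (D z / f z ^ 2) * (f z ^ 2).im) := by
      apply intervalIntegral.integral_pos hz
      · exact (hψ₂c.neg)
      · intro x hx
        have hxI : x ∈ Icc z₁ z₂ := ⟨hx.1.le, hx.2⟩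
        have := mul_nonpos_of_nonneg_of_nonpos (normSq_nonneg (D x / f x ^ 2)) (hIm x hxI).le
        linarith
      · refine ⟨zs, hzs, ?_⟩
        have hq : D zs / f zs ^ 2 ≠ 0 := div_ne_zero hDzs (hf2ne zs hzs)
        have := mul_pos (normSq_pos.mpr hq) (neg_pos.mpr (hIm zs hzs))
        nlinarith [this]
    rw [intervalIntegral.integral_neg] at hpos
    linarith
  rw [hsplit] at hFTC
  linarith
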